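/- Under the hypotheses of the multiplier boundedness result (v^t KKT points of NLP_{ε_t} with LICQ, ε_t ↓ 0, v^t → v*, MPEC-LICQ at v*), any accumulation point v* is a C-stationary point of the MPEC: there exist multipliers γ, ν ∈ ℝ^m with ∇f(v*) = Σᵢ γᵢ∇G_i(v*) + Σᵢ νᵢ∇H_i(v*), γᵢ = 0 for i ∈ I_{+0}, νᵢ = 0 for i ∈ I_{0+}, and γᵢνᵢ ≥ 0 for all i ∈ I_{00}. -/

import Mathlib

open Filter

/-- The FB weight `1 − a/√(a² + b² + ε²)`. -/
noncomputable def fbWeight (ε a b : ℝ) : ℝ := 1 - a / Real.sqrt (a ^ 2 + b ^ 2 + ε ^ 2)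

lemma sum_subtype_eq {α M : Type*} [Fintype α] [AddCommMonoid M]
    (p : α → Prop) [DecidablePred p] (F : α → M) :
    (∑ i : {i // p i}, F i.1) = ∑ i : α, if p i then F i else 0 := by
  rw [← Finset.sum_filter]
  exact (Finset.sum_subtype (Finset.univ.filter p) (by simp) F).symm

lemma fbWeight_pos {e a b : ℝ} (ha : 0 < a) (he : e ≠ 0) : 0 < fbWeight e a b := by
  unfold fbWeight
  have hrad : 0 < b ^ 2 + e ^ 2 := by positivity
  have h1 : a < Real.sqrt (a ^ 2 + b ^ 2 + e ^ 2) := by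
    exact (Real.lt_sqrt ha.le).mpr (by nlinarith)
  have h2 : 0 < Real.sqrt (a ^ 2 + b ^ 2 + e ^ 2) := lt_trans ha h1
  have := (div_lt_one h2).mpr h1
  linarith

lemma fbWeight_tendsto {a b e : ℕ → ℝ} {A B : ℝ}
    (ha : Tendsto a atTop (nhds A)) (hb : Tendsto b atTop (nhds B))
    (he : Tendsto e atTop (nhds 0)) (hAB : A ^ 2 + B ^ 2 ≠ 0) :
    Tendsto (fun t => fbWeight (e t) (a t) (b t)) atTop
      (nhds (1 - A / Real.sqrt (A ^ 2 + B ^ 2))) := by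
  have hpos : 0 < A ^ 2 + B ^ 2 := lt_of_le_of_ne (by positivity) (Ne.symm hAB)
  have hrad : Tendsto (fun t => (a t) ^ 2 + (b t) ^ 2 + (e t) ^ 2) atTop
      (nhds (A ^ 2 + B ^ 2)) := by
    have := (((ha.pow 2).add (hb.pow 2)).add (he.pow 2))
    simpa using this
  have hsqrt : Tendsto (fun t => Real.sqrt ((a t) ^ 2 + (b t) ^ 2 + (e t) ^ 2)) atTop
      (nhds (Real.sqrt (A ^ 2 + B ^ 2))) :=
    (Real.continuous_sqrt.tendsto _).comp hrad
  have hne : Real.sqrt (A ^ 2 + B ^ 2) ≠ 0 := by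
    positivity
  exact (tendsto_const_nhds.sub (ha.div hsqrt hne))

section Lemma1

/-- The map `κ ↦ ∑ j, κ j • w j` as a continuous linear map. -/
noncomputable def coeffMap {E : Type*} [NormedAddCommGroup E] [NormedSpace ℝ E]
    {J : Type*} [Fintype J] (w : J → E) : (J → ℝ) →L[ℝ] E :=
  ∑ j, (ContinuousLinearMap.proj j : (J → ℝ) →L[ℝ] ℝ).smulRight (w j)

lemma coeffMap_apply {E : Type*} [NormedAddCommGroup E] [NormedSpace ℝ E]
    {J : Type*} [Fintype J] (w : J → E) (κ : J → ℝ) :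
    coeffMap w κ = ∑ j, κ j • w j := by
  simp [coeffMap, ContinuousLinearMap.sum_apply]

lemma coeffMap_tendsto {E : Type*} [NormedAddCommGroup E] [NormedSpace ℝ E]
    {J : Type*} [Fintype J] (V : ℕ → J → E) (u : J → E)
    (hV : ∀ j, Tendsto (fun t => V t j) atTop (nhds (u j))) :
    Tendsto (fun t => coeffMap (V t)) atTop (nhds (coeffMap u)) := by
  unfold coeffMap
  exact tendsto_finset_sum _ fun j _ =>
    ((ContinuousLinearMap.smulRightL ℝ (J → ℝ) E
      (ContinuousLinearMap.proj j)).continuous.tendsto _).comp (hV j)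

lemma tendsto_clm_app {E F : Type*} [NormedAddCommGroup E] [NormedSpace ℝ E]
    [NormedAddCommGroup F] [NormedSpace ℝ F]
    {A : ℕ → E →L[ℝ] F} {A0 : E →L[ℝ] F} {y : ℕ → E} {y0 : E}
    (hA : Tendsto A atTop (nhds A0)) (hy : Tendsto y atTop (nhds y0)) :
    Tendsto (fun t => A t (y t)) atTop (nhds (A0 y0)) :=
  (isBoundedBilinearMap_apply.continuous.tendsto (A0, y0)).comp (hA.prodMk_nhds hy)

lemma limit_coeffs {E : Type*} [NormedAddCommGroup E] [NormedSpace ℝ E]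
    [FiniteDimensional ℝ E]
    {J : Type*} [Fintype J] (u : J → E) (hu : LinearIndependent ℝ u)
    (V : ℕ → J → E) (hV : ∀ j, Tendsto (fun t => V t j) atTop (nhds (u j)))
    (x : ℕ → E) (xs : E) (hx : Tendsto x atTop (nhds xs))
    (κ : ℕ → J → ℝ) (hrep : ∀ t, x t = ∑ j, κ t j • V t j) :
    ∃ c : J → ℝ, (∀ j, Tendsto (fun t => κ t j) atTop (nhds (c j))) ∧
      xs = ∑ j, c j • u j := by
  -- left inverse of `coeffMap u`
  have hinj : LinearMap.ker (coeffMap u : (J → ℝ) →ₗ[ℝ] E) = ⊥ := by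
    rw [LinearMap.ker_eq_bot']
    intro κ hκ
    have := Fintype.linearIndependent_iff.mp hu κ (by
      simpa [coeffMap_apply] using hκ)
    funext j; exact this j
  obtain ⟨L₀, hL₀⟩ := LinearMap.exists_leftInverse_of_injective
    (coeffMap u : (J → ℝ) →ₗ[ℝ] E) hinj
  let L : E →L[ℝ] (J → ℝ) := L₀.toContinuousLinearMap
  have hL : ∀ y : J → ℝ, L (coeffMap u y) = y := by
    intro y
    have := LinearMap.congr_fun hL₀ y
    have h2 : L₀ (coeffMap u y) = y := by simpa using this
    exact h2
  -- the composed maps T t → 1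
  set T : ℕ → ((J → ℝ) →L[ℝ] (J → ℝ)) := fun t => L.comp (coeffMap (V t)) with hT
  have hTone : L.comp (coeffMap u) = 1 := by
    ext y j
    have := congr_fun (hL y) j
    simpa using this
  have hTtend : Tendsto T atTop (nhds 1) := by
    rw [← hTone]
    exact ((ContinuousLinearMap.compL ℝ (J → ℝ) E (J → ℝ) L).continuous.tendsto _).comp
      (coeffMap_tendsto V u hV)
  -- eventually T t is a unit
  have hopen : IsOpen {A : (J → ℝ) →L[ℝ] (J → ℝ) | IsUnit A} := Units.isOpen
  have hev : ∀ᶠ t in atTop, IsUnit (T t) :=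
    hTtend.eventually_mem (hopen.mem_nhds isUnit_one)
  -- Ring.inverse (T t) → 1
  have hinv : Tendsto (fun t => Ring.inverse (T t)) atTop (nhds 1) := by
    have h1 : ContinuousAt Ring.inverse ((1 : ((J → ℝ) →L[ℝ] (J → ℝ))ˣ) :
        (J → ℝ) →L[ℝ] (J → ℝ)) := NormedRing.inverse_continuousAt 1
    have := (h1.tendsto.comp hTtend)
    simpa [Function.comp_def] using this
  -- κ t = Ring.inverse (T t) (L (x t)) eventually
  have hκeq : ∀ᶠ t in atTop, κ t = Ring.inverse (T t) (L (x t)) := by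
    filter_upwards [hev] with t ht
    have h1 : T t (κ t) = L (x t) := by
      simp only [hT, ContinuousLinearMap.comp_apply]
      rw [hrep t, coeffMap_apply]
    calc κ t = (Ring.inverse (T t) * T t) (κ t) := by
          rw [Ring.inverse_mul_cancel _ ht]; simp
      _ = Ring.inverse (T t) (T t (κ t)) := rfl
      _ = Ring.inverse (T t) (L (x t)) := by rw [h1]
  -- limit of κ
  have hκlim : Tendsto κ atTop (nhds (L xs)) := by
    have happ : Tendsto (fun t => (Ring.inverse (T t)) (L (x t))) atTop
        (nhds ((1 : (J → ℝ) →L[ℝ] (J → ℝ)) (L xs))) := by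
      exact tendsto_clm_app hinv ((L.continuous.tendsto _).comp hx)
    rw [ContinuousLinearMap.one_apply] at happ
    exact happ.congr' (by filter_upwards [hκeq] with t ht; rw [ht])
  refine ⟨L xs, fun j => ?_, ?_⟩
  · exact (continuous_apply j).continuousAt.tendsto.comp hκlim
  · have h2 : Tendsto x atTop (nhds (coeffMap u (L xs))) := by
      have : Tendsto (fun t => coeffMap (V t) (κ t)) atTop (nhds (coeffMap u (L xs))) :=
        tendsto_clm_app (coeffMap_tendsto V u hV) hκlim
      refine this.congr fun t => ?_
      rw [hrep t, coeffMap_apply]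
    have hxs := tendsto_nhds_unique hx h2
    rw [← coeffMap_apply]; exact hxs

end Lemma1


set_option maxHeartbeats 1600000

/-- Convergence to a C-stationary point: if `v^t` are KKT points of (NLP_{ε_t}) at
which LICQ holds, `ε_t ↓ 0`, `v^t → v*`, and MPEC-LICQ holds at `v*`, then `v*` is
C-stationary for the MPEC: there are multipliers `γ, ν` with
`∇f(v*) = Σᵢ γᵢ ∇G_i(v*) + Σᵢ νᵢ ∇H_i(v*)`, `γᵢ = 0` on `I_{+0}`, `νᵢ = 0` on
`I_{0+}`, and `γᵢ νᵢ ≥ 0` on `I_{00}`. -/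
theorem smoothing_c_stationary {n m : ℕ}
    (f : (Fin n → ℝ) → ℝ) (G H : (Fin n → ℝ) → Fin m → ℝ)
    (hf : ContDiff ℝ 1 f)
    (hG : ∀ i, ContDiff ℝ 1 (fun x => G x i))
    (hH : ∀ i, ContDiff ℝ 1 (fun x => H x i))
    (ε : ℕ → ℝ) (hεpos : ∀ t, 0 < ε t) (hεanti : StrictAnti ε)
    (hε0 : Tendsto ε atTop (nhds 0))
    (v : ℕ → Fin n → ℝ) (lam : ℕ → Fin m → ℝ)
    -- feasibility for (NLP_{ε_t})
    (hfeas : ∀ t i, G (v t) i + H (v t) i -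
      Real.sqrt ((G (v t) i) ^ 2 + (H (v t) i) ^ 2 + (ε t) ^ 2) = 0)
    -- KKT stationarity of (NLP_{ε_t})
    (hkkt : ∀ t, fderiv ℝ f (v t) =
      ∑ i : Fin m, lam t i •
        (fbWeight (ε t) (G (v t) i) (H (v t) i) • fderiv ℝ (fun x => G x i) (v t) +
         fbWeight (ε t) (H (v t) i) (G (v t) i) • fderiv ℝ (fun x => H x i) (v t)))
    -- LICQ at each `v^t`
    (hlicq : ∀ t, LinearIndependent ℝ (fun i : Fin m =>
      fbWeight (ε t) (G (v t) i) (H (v t) i) • fderiv ℝ (fun x => G x i) (v t) +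
      fbWeight (ε t) (H (v t) i) (G (v t) i) • fderiv ℝ (fun x => H x i) (v t)))
    (vstar : Fin n → ℝ)
    (hconv : Tendsto v atTop (nhds vstar))
    -- MPEC-LICQ at `v*`
    (hmpec : LinearIndependent ℝ (Sum.elim
      (fun i : {i : Fin m // G vstar i = 0} => fderiv ℝ (fun x => G x i.1) vstar)
      (fun i : {i : Fin m // H vstar i = 0} => fderiv ℝ (fun x => H x i.1) vstar))) :
    ∃ γ ν : Fin m → ℝ,
      fderiv ℝ f vstar =
        (∑ i : Fin m, γ i • fderiv ℝ (fun x => G x i) vstar) +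
        (∑ i : Fin m, ν i • fderiv ℝ (fun x => H x i) vstar) ∧
      (∀ i, 0 < G vstar i ∧ H vstar i = 0 → γ i = 0) ∧
      (∀ i, G vstar i = 0 ∧ 0 < H vstar i → ν i = 0) ∧
      (∀ i, G vstar i = 0 ∧ H vstar i = 0 → 0 ≤ γ i * ν i) := by
  classical
  set wG : ℕ → Fin m → ℝ := fun t i => fbWeight (ε t) (G (v t) i) (H (v t) i) with hwGdef
  set wH : ℕ → Fin m → ℝ := fun t i => fbWeight (ε t) (H (v t) i) (G (v t) i) with hwHdef
  -- basic facts from feasibility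
  have hbasic : ∀ t i, 0 < G (v t) i ∧ 0 < H (v t) i ∧
      G (v t) i * H (v t) i = ε t ^ 2 / 2 := by
    intro t i
    have hs := hfeas t i
    set a := G (v t) i with ha'
    set b := H (v t) i with hb'
    have hε := hεpos t
    have hrad : (0:ℝ) ≤ a ^ 2 + b ^ 2 + ε t ^ 2 := by positivity
    have hsq : Real.sqrt (a ^ 2 + b ^ 2 + ε t ^ 2) ^ 2 = a ^ 2 + b ^ 2 + ε t ^ 2 :=
      Real.sq_sqrt hrad
    have hab : a + b = Real.sqrt (a ^ 2 + b ^ 2 + ε t ^ 2) := by linarith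
    have h4 : (a + b) ^ 2 = a ^ 2 + b ^ 2 + ε t ^ 2 := by rw [hab]; exact hsq
    have hprod : a * b = ε t ^ 2 / 2 := by linear_combination h4 / 2
    have habpos : 0 < a * b := by rw [hprod]; positivity
    have hsum : 0 < a + b := by
      rw [hab]; apply Real.sqrt_pos.mpr; nlinarith
    have hA : 0 < a := by nlinarith
    have hB : 0 < b := by nlinarith
    exact ⟨hA, hB, hprod⟩
  -- limits of constraint values
  have hGt : ∀ i, Tendsto (fun t => G (v t) i) atTop (nhds (G vstar i)) :=
    fun i => ((hG i).continuous.tendsto vstar).comp hconv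
  have hHt : ∀ i, Tendsto (fun t => H (v t) i) atTop (nhds (H vstar i)) :=
    fun i => ((hH i).continuous.tendsto vstar).comp hconv
  have hGs : ∀ i, 0 ≤ G vstar i :=
    fun i => ge_of_tendsto' (hGt i) (fun t => (hbasic t i).1.le)
  have hHs : ∀ i, 0 ≤ H vstar i :=
    fun i => ge_of_tendsto' (hHt i) (fun t => (hbasic t i).2.1.le)
  have hcompl : ∀ i, G vstar i * H vstar i = 0 := by
    intro i
    have h1 : Tendsto (fun t => G (v t) i * H (v t) i) atTop
        (nhds (G vstar i * H vstar i)) := (hGt i).mul (hHt i)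
    have h2 : Tendsto (fun t => G (v t) i * H (v t) i) atTop (nhds 0) := by
      have h3 : Tendsto (fun t => ε t ^ 2 / 2) atTop (nhds 0) := by
        have := (hε0.pow 2).div_const 2
        simpa using this
      exact h3.congr fun t => ((hbasic t i).2.2).symm
    exact tendsto_nhds_unique h1 h2
  -- positivity of the weights
  have hwGpos : ∀ t i, 0 < wG t i := fun t i => fbWeight_pos (hbasic t i).1 (hεpos t).ne'
  have hwHpos : ∀ t i, 0 < wH t i := fun t i => fbWeight_pos (hbasic t i).2.1 (hεpos t).ne'
  -- weight limits in the two branch cases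
  have hwG1 : ∀ i, G vstar i = 0 → H vstar i ≠ 0 →
      Tendsto (fun t => wG t i) atTop (nhds 1) := by
    intro i hGi hHi
    have := fbWeight_tendsto (hGt i) (hHt i) hε0
      (by rw [hGi]; intro h; exact hHi (by nlinarith [sq_nonneg (H vstar i)]))
    rw [hGi] at this
    simpa using this
  have hwH0 : ∀ i, G vstar i = 0 → H vstar i ≠ 0 →
      Tendsto (fun t => wH t i) atTop (nhds 0) := by
    intro i hGi hHi
    have hHpos : 0 < H vstar i := lt_of_le_of_ne (hHs i) (Ne.symm hHi)
    have := fbWeight_tendsto (hHt i) (hGt i) hε0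
      (by rw [hGi]; intro h; exact hHi (by nlinarith [sq_nonneg (H vstar i)]))
    rw [hGi] at this
    have hsq : Real.sqrt (H vstar i ^ 2 + 0 ^ 2) = H vstar i := by
      rw [show H vstar i ^ 2 + (0:ℝ) ^ 2 = H vstar i ^ 2 by ring,
        Real.sqrt_sq (hHs i)]
    rw [hsq] at this
    simpa [div_self hHi] using this
  have hwH1 : ∀ i, H vstar i = 0 → G vstar i ≠ 0 →
      Tendsto (fun t => wH t i) atTop (nhds 1) := by
    intro i hHi hGi
    have := fbWeight_tendsto (hHt i) (hGt i) hε0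
      (by rw [hHi]; intro h; exact hGi (by nlinarith [sq_nonneg (G vstar i)]))
    rw [hHi] at this
    simpa using this
  have hwG0 : ∀ i, H vstar i = 0 → G vstar i ≠ 0 →
      Tendsto (fun t => wG t i) atTop (nhds 0) := by
    intro i hHi hGi
    have := fbWeight_tendsto (hGt i) (hHt i) hε0
      (by rw [hHi]; intro h; exact hGi (by nlinarith [sq_nonneg (G vstar i)]))
    rw [hHi] at this
    have hsq : Real.sqrt (G vstar i ^ 2 + 0 ^ 2) = G vstar i := by
      rw [show G vstar i ^ 2 + (0:ℝ) ^ 2 = G vstar i ^ 2 by ring,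
        Real.sqrt_sq (hGs i)]
    rw [hsq] at this
    simpa [div_self hGi] using this
  -- derivative limits
  have hdG : ∀ i : Fin m, Tendsto (fun t => fderiv ℝ (fun x => G x i) (v t)) atTop
      (nhds (fderiv ℝ (fun x => G x i) vstar)) :=
    fun i => (((hG i).continuous_fderiv one_ne_zero).tendsto vstar).comp hconv
  have hdH : ∀ i : Fin m, Tendsto (fun t => fderiv ℝ (fun x => H x i) (v t)) atTop
      (nhds (fderiv ℝ (fun x => H x i) vstar)) :=
    fun i => (((hH i).continuous_fderiv one_ne_zero).tendsto vstar).comp hconv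
  have hdf : Tendsto (fun t => fderiv ℝ f (v t)) atTop (nhds (fderiv ℝ f vstar)) :=
    ((hf.continuous_fderiv one_ne_zero).tendsto vstar).comp hconv
  -- the limiting family and the approximating families
  set u : ({i : Fin m // G vstar i = 0} ⊕ {i : Fin m // H vstar i = 0}) →
      ((Fin n → ℝ) →L[ℝ] ℝ) := Sum.elim
      (fun i => fderiv ℝ (fun x => G x i.1) vstar)
      (fun i => fderiv ℝ (fun x => H x i.1) vstar) with hu
  set V : ℕ → ({i : Fin m // G vstar i = 0} ⊕ {i : Fin m // H vstar i = 0}) →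
      ((Fin n → ℝ) →L[ℝ] ℝ) := fun t => Sum.elim
      (fun i => fderiv ℝ (fun x => G x i.1) (v t) +
        (if H vstar i.1 = 0 then 0 else wH t i.1 / wG t i.1) •
          fderiv ℝ (fun x => H x i.1) (v t))
      (fun i => fderiv ℝ (fun x => H x i.1) (v t) +
        (if G vstar i.1 = 0 then 0 else wG t i.1 / wH t i.1) •
          fderiv ℝ (fun x => G x i.1) (v t)) with hVdef
  set κ : ℕ → ({i : Fin m // G vstar i = 0} ⊕ {i : Fin m // H vstar i = 0}) → ℝ :=
    fun t => Sum.elim (fun i => lam t i.1 * wG t i.1) (fun i => lam t i.1 * wH t i.1)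
      with hκdef
  have hV : ∀ j, Tendsto (fun t => V t j) atTop (nhds (u j)) := by
    rintro (⟨i, hi⟩ | ⟨i, hi⟩)
    · by_cases hHi : H vstar i = 0
      · have h1 : Tendsto (fun t => fderiv ℝ (fun x => G x i) (v t) +
            (0:ℝ) • fderiv ℝ (fun x => H x i) (v t)) atTop
            (nhds (fderiv ℝ (fun x => G x i) vstar +
              (0:ℝ) • fderiv ℝ (fun x => H x i) vstar)) :=
          (hdG i).add (tendsto_const_nhds.smul (hdH i))
        simpa [hVdef, hu, hHi] using h1
      · have hr : Tendsto (fun t => wH t i / wG t i) atTop (nhds 0) := by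
          have := (hwH0 i hi hHi).div (hwG1 i hi hHi) one_ne_zero
          rw [zero_div] at this; exact this
        have h1 : Tendsto (fun t => fderiv ℝ (fun x => G x i) (v t) +
            (wH t i / wG t i) • fderiv ℝ (fun x => H x i) (v t)) atTop
            (nhds (fderiv ℝ (fun x => G x i) vstar +
              (0:ℝ) • fderiv ℝ (fun x => H x i) vstar)) :=
          (hdG i).add (hr.smul (hdH i))
        simpa [hVdef, hu, hHi] using h1
    · by_cases hGi : G vstar i = 0
      · have h1 : Tendsto (fun t => fderiv ℝ (fun x => H x i) (v t) +
            (0:ℝ) • fderiv ℝ (fun x => G x i) (v t)) atTop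
            (nhds (fderiv ℝ (fun x => H x i) vstar +
              (0:ℝ) • fderiv ℝ (fun x => G x i) vstar)) :=
          (hdH i).add (tendsto_const_nhds.smul (hdG i))
        simpa [hVdef, hu, hGi] using h1
      · have hr : Tendsto (fun t => wG t i / wH t i) atTop (nhds 0) := by
          have := (hwG0 i hi hGi).div (hwH1 i hi hGi) one_ne_zero
          rw [zero_div] at this; exact this
        have h1 : Tendsto (fun t => fderiv ℝ (fun x => H x i) (v t) +
            (wG t i / wH t i) • fderiv ℝ (fun x => G x i) (v t)) atTop
            (nhds (fderiv ℝ (fun x => H x i) vstar +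
              (0:ℝ) • fderiv ℝ (fun x => G x i) vstar)) :=
          (hdH i).add (hr.smul (hdG i))
        simpa [hVdef, hu, hGi] using h1
  -- representation of the KKT identity in the new index set
  have hrep : ∀ t, fderiv ℝ f (v t) = ∑ j, κ t j • V t j := by
    intro t
    rw [hkkt t, Fintype.sum_sum_type]
    simp only [hκdef, hVdef, Sum.elim_inl, Sum.elim_inr]
    rw [sum_subtype_eq (fun i => G vstar i = 0)
        (fun i => (lam t i * wG t i) • (fderiv ℝ (fun x => G x i) (v t) +
          (if H vstar i = 0 then 0 else wH t i / wG t i) •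
            fderiv ℝ (fun x => H x i) (v t))),
      sum_subtype_eq (fun i => H vstar i = 0)
        (fun i => (lam t i * wH t i) • (fderiv ℝ (fun x => H x i) (v t) +
          (if G vstar i = 0 then 0 else wG t i / wH t i) •
            fderiv ℝ (fun x => G x i) (v t))),
      ← Finset.sum_add_distrib]
    refine Finset.sum_congr rfl fun i _ => ?_
    have hwGne : wG t i ≠ 0 := (hwGpos t i).ne'
    have hwHne : wH t i ≠ 0 := (hwHpos t i).ne'
    by_cases hGi : G vstar i = 0 <;> by_cases hHi : H vstar i = 0
    · simp only [hGi, hHi, if_pos, if_true]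
      simp [smul_add, smul_smul]
      rfl
    · simp only [hGi, hHi, if_true, if_false, if_neg hHi]
      rw [add_zero, smul_add, smul_add, smul_smul, smul_smul, smul_smul]
      congr 1
      congr 1
      field_simp
      ring
    · simp only [hGi, hHi, if_true, if_false, if_neg hGi]
      rw [zero_add, smul_add, smul_add, smul_smul, smul_smul, smul_smul]
      rw [add_comm]
      congr 1
      congr 1
      field_simp
      ring
    · rcases mul_eq_zero.mp (hcompl i) with h | h
      · exact absurd h hGi
      · exact absurd h hHi
  -- pass to the limit
  obtain ⟨cJ, hcJ, heq⟩ := limit_coeffs u hmpec V hV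
    (fun t => fderiv ℝ f (v t)) (fderiv ℝ f vstar) hdf κ hrep
  -- define the multipliers
  refine ⟨fun i => if h : G vstar i = 0 then cJ (Sum.inl ⟨i, h⟩) else 0,
    fun i => if h : H vstar i = 0 then cJ (Sum.inr ⟨i, h⟩) else 0, ?_, ?_, ?_, ?_⟩
  · rw [heq, Fintype.sum_sum_type]
    simp only [hu, Sum.elim_inl, Sum.elim_inr]
    congr 1
    · calc ∑ i : {i : Fin m // G vstar i = 0},
            cJ (Sum.inl i) • fderiv ℝ (fun x => G x i.1) vstar
          = ∑ i : {i : Fin m // G vstar i = 0},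
            (fun i' : Fin m => (if h : G vstar i' = 0 then cJ (Sum.inl ⟨i', h⟩) else 0) •
              fderiv ℝ (fun x => G x i') vstar) i.1 := by
            refine Finset.sum_congr rfl fun i _ => ?_
            simp only [dif_pos i.2]
        _ = ∑ i : Fin m, if G vstar i = 0 then
              (if h : G vstar i = 0 then cJ (Sum.inl ⟨i, h⟩) else 0) •
                fderiv ℝ (fun x => G x i) vstar else 0 :=
            sum_subtype_eq (fun i => G vstar i = 0)
              (fun i' => (if h : G vstar i' = 0 then cJ (Sum.inl ⟨i', h⟩) else 0) •
                fderiv ℝ (fun x => G x i') vstar)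
        _ = ∑ i : Fin m, (if h : G vstar i = 0 then cJ (Sum.inl ⟨i, h⟩) else 0) •
              fderiv ℝ (fun x => G x i) vstar := by
            refine Finset.sum_congr rfl fun i _ => ?_
            by_cases h : G vstar i = 0 <;> simp [h]
    · calc ∑ i : {i : Fin m // H vstar i = 0},
            cJ (Sum.inr i) • fderiv ℝ (fun x => H x i.1) vstar
          = ∑ i : {i : Fin m // H vstar i = 0},
            (fun i' : Fin m => (if h : H vstar i' = 0 then cJ (Sum.inr ⟨i', h⟩) else 0) •
              fderiv ℝ (fun x => H x i') vstar) i.1 := by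
            refine Finset.sum_congr rfl fun i _ => ?_
            simp only [dif_pos i.2]
        _ = ∑ i : Fin m, if H vstar i = 0 then
              (if h : H vstar i = 0 then cJ (Sum.inr ⟨i, h⟩) else 0) •
                fderiv ℝ (fun x => H x i) vstar else 0 :=
            sum_subtype_eq (fun i => H vstar i = 0)
              (fun i' => (if h : H vstar i' = 0 then cJ (Sum.inr ⟨i', h⟩) else 0) •
                fderiv ℝ (fun x => H x i') vstar)
        _ = ∑ i : Fin m, (if h : H vstar i = 0 then cJ (Sum.inr ⟨i, h⟩) else 0) •
              fderiv ℝ (fun x => H x i) vstar := by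
            refine Finset.sum_congr rfl fun i _ => ?_
            by_cases h : H vstar i = 0 <;> simp [h]
  · intro i ⟨h1, _⟩
    exact dif_neg h1.ne'
  · intro i ⟨_, h2⟩
    exact dif_neg h2.ne'
  · intro i ⟨hGi, hHi⟩
    simp only [dif_pos hGi, dif_pos hHi]
    have t1 : Tendsto (fun t => lam t i * wG t i) atTop (nhds (cJ (Sum.inl ⟨i, hGi⟩))) := by
      have := hcJ (Sum.inl ⟨i, hGi⟩)
      simpa [hκdef] using this
    have t2 : Tendsto (fun t => lam t i * wH t i) atTop (nhds (cJ (Sum.inr ⟨i, hHi⟩))) := by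
      have := hcJ (Sum.inr ⟨i, hHi⟩)
      simpa [hκdef] using this
    refine ge_of_tendsto' (t1.mul t2) fun t => ?_
    have : (lam t i * wG t i) * (lam t i * wH t i) =
        lam t i ^ 2 * (wG t i * wH t i) := by ring
    rw [this]
    exact mul_nonneg (sq_nonneg _) (mul_pos (hwGpos t i) (hwHpos t i)).le
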